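/- Let $(R,\mathfrak{m})$ be a two-dimensional regular local ring with regular system of parameters $x, y$, and let $0 < \alpha < \beta < n$ be integers. Set $I = (x^3, x^2y^{\alpha}, xy^{\beta}, y^n)$ and $Q = (x^3, y^n)$. Then $I^2 = QI$ if and only if $\beta \leq 2\alpha$, $n \leq \alpha + \beta$, and $n + \alpha \leq 2\beta$. -/

import Mathlib

open Ideal IsLocalRing Submodule

section Aux
variable {R : Type*} [CommRing R]

/-- Relative Nakayama lemma for ideals in a noetherian local ring. -/
lemma my_nak [IsNoetherianRing R] [IsLocalRing R] (N N' : Ideal R)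
    (h : N ≤ N' ⊔ maximalIdeal R • N) : N ≤ N' := by
  set f := N'.mkQ with hf
  have hM : Submodule.map f N ≤ maximalIdeal R • Submodule.map f N := by
    refine le_trans (Submodule.map_mono h) ?_
    rw [Submodule.map_sup, Submodule.map_smul'', Submodule.mkQ_map_self, bot_sup_eq]
  have hbot : Submodule.map f N = ⊥ :=
    Submodule.eq_bot_of_le_smul_of_le_jacobson_bot (maximalIdeal R) _
      (IsNoetherian.noetherian _) hM
      (by rw [IsLocalRing.jacobson_eq_maximalIdeal ⊥ bot_ne_top])
  intro n hn
  have : f n ∈ Submodule.map f N := Submodule.mem_map_of_mem hn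
  rw [hbot, Submodule.mem_bot] at this
  rwa [hf, Submodule.mkQ_apply, Submodule.Quotient.mk_eq_zero] at this


lemma exists_mid_prime [IsLocalRing R] (hdim : ringKrullDim R = 2) :
    ∃ p : Ideal R, p.IsPrime ∧ ⊥ < p ∧ p < maximalIdeal R := by
  have h2 : ¬ (ringKrullDim R ≤ 1) := by
    rw [hdim]; decide
  obtain ⟨s, hs⟩ : ∃ s : LTSeries (PrimeSpectrum R), ¬((s.length : WithBot ℕ∞) ≤ 1) := by
    by_contra hc
    push_neg at hc
    exact h2 (iSup_le hc)
  have hlen : 2 ≤ s.length := by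
    by_contra hl
    push_neg at hl
    exact hs (by exact_mod_cast Nat.lt_succ_iff.mp hl)
  have h01 : s ⟨0, by omega⟩ < s ⟨1, by omega⟩ := s.strictMono (by simp [Fin.lt_def])
  have h12 : s ⟨1, by omega⟩ < s ⟨2, by omega⟩ := s.strictMono (by simp [Fin.lt_def])
  refine ⟨(s ⟨1, by omega⟩).asIdeal, (s ⟨1, by omega⟩).2, ?_, ?_⟩
  · refine lt_of_le_of_lt (bot_le : (⊥ : Ideal R) ≤ (s ⟨0, by omega⟩).asIdeal) ?_
    exact (PrimeSpectrum.asIdeal_lt_asIdeal _ _).2 h01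
  · exact lt_of_lt_of_le ((PrimeSpectrum.asIdeal_lt_asIdeal _ _).2 h12)
      (IsLocalRing.le_maximalIdeal (s ⟨2, by omega⟩).2.ne_top)

lemma prime_eq_span_singleton [IsNoetherianRing R] [IsLocalRing R] {x y : R}
    (hm : maximalIdeal R = Ideal.span {x, y}) {p : Ideal R} (hp : p.IsPrime)
    (hxp : x ∈ p) (hlt : p < maximalIdeal R) : p = Ideal.span {x} := by
  have hym : y ∈ maximalIdeal R := hm ▸ Ideal.subset_span (by simp)
  have hyp : y ∉ p := by
    intro hy
    refine hlt.ne (le_antisymm hlt.le ?_)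
    rw [hm, Ideal.span_le]
    rintro t (rfl | rfl) <;> assumption
  refine le_antisymm ?_ ((Ideal.span_singleton_le_iff_mem p).2 hxp)
  refine my_nak p (Ideal.span {x}) ?_
  intro v hv
  obtain ⟨a, b, hab⟩ := Ideal.mem_span_pair.1 (hm ▸ hlt.le hv)
  have hby : b * y ∈ p := by
    have : v - a * x ∈ p := sub_mem hv (p.mul_mem_left a hxp)
    rwa [← hab, add_sub_cancel_left] at this
  have hb : b ∈ p := (hp.mem_or_mem hby).resolve_right hyp
  have h1 : a * x ∈ Ideal.span {x} := Ideal.mul_mem_left _ a (Ideal.mem_span_singleton_self x)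
  have h2 : b * y ∈ maximalIdeal R • p := by
    rw [smul_eq_mul, mul_comm b y]
    exact Ideal.mul_mem_mul hym hb
  rw [← hab]
  exact Submodule.add_mem_sup h1 h2

lemma span_x_isPrime [IsDomain R] [IsNoetherianRing R] [IsLocalRing R] {x y : R}
    (hm : maximalIdeal R = Ideal.span {x, y})
    (hdim : ringKrullDim R = 2) : (Ideal.span {x}).IsPrime := by
  classical
  have hxm : x ∈ maximalIdeal R := hm ▸ Ideal.subset_span (by simp)
  have hym : y ∈ maximalIdeal R := hm ▸ Ideal.subset_span (by simp)
  obtain ⟨p, hp, hbot, hlt⟩ := exists_mid_prime hdim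
  by_cases hex : ∃ q : Ideal R, q.IsPrime ∧ x ∈ q ∧ q < maximalIdeal R
  · obtain ⟨q, hq, hxq, hqlt⟩ := hex
    exact (prime_eq_span_singleton hm hq hxq hqlt) ▸ hq
  exfalso
  push_neg at hex
  -- the radical of (x) is the maximal ideal, so some power of y lies in (x)
  obtain ⟨N, hN⟩ : ∃ n : ℕ, y ^ n ∈ Ideal.span {x} := by
    have hrad : y ∈ (Ideal.span {x}).radical := by
      rw [Ideal.radical_eq_sInf]
      refine Ideal.mem_sInf.2 ?_
      rintro q ⟨hle, hq⟩
      have hq_le : q ≤ maximalIdeal R := IsLocalRing.le_maximalIdeal hq.ne_top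
      rcases eq_or_lt_of_le hq_le with h | h
      · exact h ▸ hym
      · exact absurd h (hex q hq (hle (Ideal.mem_span_singleton_self x)))
    exact hrad
  have hxp : x ∉ p := fun hxq => hex p hp hxq hlt
  obtain ⟨z, hzp, hz0⟩ := SetLike.exists_of_lt hbot
  have hz0 : z ≠ 0 := by simpa using hz0
  -- representation of elements outside (x)
  have hrep : ∀ r : R, r ∉ Ideal.span {x} →
      ∃ (i : ℕ) (c a : R), IsUnit c ∧ r = a * x + c * y ^ i := by
    intro r hr
    have hQN : ¬ (r ∈ Ideal.span {x} ⊔ Ideal.span {y ^ N}) := by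
      intro h
      exact hr ((sup_le le_rfl ((Ideal.span_singleton_le_iff_mem _).2 hN)) h)
    have hPn : ∃ j, ¬ (r ∈ Ideal.span {x} ⊔ Ideal.span {y ^ j}) := ⟨N, hQN⟩
    set j0 := Nat.find hPn with hj0def
    have hj0 : ¬ (r ∈ Ideal.span {x} ⊔ Ideal.span {y ^ j0}) := Nat.find_spec hPn
    have hj0pos : j0 ≠ 0 := by
      intro h
      apply hj0
      rw [h, pow_zero, Ideal.span_singleton_one]
      exact Submodule.mem_sup_right Submodule.mem_top
    have hi : r ∈ Ideal.span {x} ⊔ Ideal.span {y ^ (j0 - 1)} :=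
      of_not_not (Nat.find_min hPn (by omega))
    obtain ⟨u, hu, v, hv, huv⟩ := Submodule.mem_sup.1 hi
    obtain ⟨a, rfl⟩ := Ideal.mem_span_singleton'.1 hu
    obtain ⟨c, rfl⟩ := Ideal.mem_span_singleton'.1 hv
    refine ⟨j0 - 1, c, a, ?_, huv.symm⟩
    by_contra hc
    have hcm : c ∈ maximalIdeal R := hc
    obtain ⟨c1, c2, hc12⟩ := Ideal.mem_span_pair.1 (hm ▸ hcm)
    apply hj0
    obtain ⟨k, hk⟩ : ∃ k, j0 = k + 1 := ⟨j0 - 1, by omega⟩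
    rw [hk] at huv ⊢
    simp only [Nat.add_sub_cancel] at huv
    have : r = (a + c1 * y ^ k) * x + c2 * y ^ (k + 1) := by
      rw [← huv, ← hc12]; ring
    rw [this]
    refine Submodule.add_mem _ ?_ ?_
    · exact Submodule.mem_sup_left (Ideal.mul_mem_left _ _ (Ideal.mem_span_singleton_self x))
    · exact Submodule.mem_sup_right (Ideal.mul_mem_left _ _ (Ideal.mem_span_singleton_self _))
  -- symbolic powers
  haveI := hp
  set Rp := Localization.AtPrime p with hRp
  set f := algebraMap R Rp with hfdef
  haveI : IsNoetherianRing Rp := IsLocalization.isNoetherianRing p.primeCompl Rp ‹_›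
  have hfx : IsUnit (f x) := IsLocalization.map_units Rp (⟨x, hxp⟩ : p.primeCompl)
  set sp : ℕ → Ideal R := fun j => ((p ^ j).map f).comap f with hspdef
  have hspmono : ∀ j, sp (j + 1) ≤ sp j := fun j =>
    Ideal.comap_mono (Ideal.map_mono (Ideal.pow_le_pow_right (by omega)))
  set C : ℕ → Ideal R := fun j => Ideal.span {x} ⊔ sp j with hCdef
  have hCy : ∀ j, ∃ i, y ^ i ∈ C j := fun j =>
    ⟨N, Submodule.mem_sup_left hN⟩
  set g : ℕ → ℕ := fun j => Nat.find (hCy j) with hgdef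
  have hCmono : ∀ j, C (j + 1) ≤ C j := fun j => sup_le_sup_left (hspmono j) _
  have hgmono : ∀ j, g j ≤ g (j + 1) := fun j =>
    Nat.find_min' _ (hCmono j (Nat.find_spec (hCy (j + 1))))
  have hgN : ∀ j, g j ≤ N := fun j => Nat.find_min' _ (Submodule.mem_sup_left hN)
  obtain ⟨j, hj⟩ : ∃ j, g j = g (j + 1) := by
    by_contra hcon
    push_neg at hcon
    have hstrict : ∀ j, g j < g (j + 1) := fun j => lt_of_le_of_ne (hgmono j) (hcon j)
    have hge : ∀ j, j ≤ g j := by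
      intro j
      induction j with
      | zero => omega
      | succ n ih => exact lt_of_le_of_lt ih (hstrict n)
    have := hge (N + 1)
    have := hgN (N + 1)
    omega
  have hC_le : ∀ j', C j' ≤ Ideal.span {x} ⊔ Ideal.span {y ^ g j'} := by
    intro j' r hr
    by_cases hrx : r ∈ Ideal.span {x}
    · exact Submodule.mem_sup_left hrx
    obtain ⟨i, c, a, hc, rfl⟩ := hrep r hrx
    have hyi : y ^ i ∈ C j' := by
      have h1 : c * y ^ i ∈ C j' := by
        have h2 : a * x ∈ C j' :=
          Submodule.mem_sup_left (Ideal.mul_mem_left _ _ (Ideal.mem_span_singleton_self x))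
        have h3 := Submodule.sub_mem _ hr h2
        simpa [add_sub_cancel_left] using h3
      have h4 := Ideal.mul_mem_left (C j') (↑hc.unit⁻¹) h1
      rwa [← mul_assoc, IsUnit.val_inv_mul, one_mul] at h4
    have hgle : g j' ≤ i := Nat.find_min' _ hyi
    refine Submodule.add_mem _ ?_ ?_
    · exact Submodule.mem_sup_left (Ideal.mul_mem_left _ _ (Ideal.mem_span_singleton_self x))
    · exact Submodule.mem_sup_right (Ideal.mul_mem_left _ _
        (Ideal.mem_span_singleton.2 (pow_dvd_pow y hgle)))
  have hkey : sp j ≤ sp (j + 1) ⊔ maximalIdeal R • sp j := by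
    intro r hr
    have h1 : r ∈ Ideal.span {x} ⊔ Ideal.span {y ^ g j} := hC_le j (Submodule.mem_sup_right hr)
    rw [hj] at h1
    have h2 : r ∈ Ideal.span {x} ⊔ sp (j + 1) := by
      have h3 : Ideal.span {y ^ g (j + 1)} ≤ C (j + 1) :=
        (Ideal.span_singleton_le_iff_mem _).2 (Nat.find_spec (hCy (j + 1)))
      have h4 := (sup_le_sup_left h3 _) h1
      rwa [hCdef, ← sup_assoc, sup_idem] at h4
    obtain ⟨u, hu, v, hv, huv⟩ := Submodule.mem_sup.1 h2
    obtain ⟨a, rfl⟩ := Ideal.mem_span_singleton'.1 hu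
    have hax : a * x ∈ sp j := by
      have h5 := Submodule.sub_mem _ hr (hspmono j hv)
      rw [← huv, add_sub_cancel_right] at h5
      exact h5
    have ha : a ∈ sp j := by
      have hax' : f (a * x) ∈ Ideal.map f (p ^ j) := hax
      rw [_root_.map_mul] at hax'
      have h6 := Ideal.mul_mem_left _ (↑hfx.unit⁻¹) hax'
      rw [show (↑hfx.unit⁻¹ : Rp) * (f a * f x) = (↑hfx.unit⁻¹ * f x) * f a by ring,
        IsUnit.val_inv_mul, one_mul] at h6
      exact h6
    rw [← huv]
    refine Submodule.add_mem _ ?_ (Submodule.mem_sup_left hv)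
    refine Submodule.mem_sup_right ?_
    rw [smul_eq_mul, show a * x = x * a by ring]
    exact Ideal.mul_mem_mul hxm ha
  have hsub : sp j = sp (j + 1) := le_antisymm (my_nak _ _ hkey) (hspmono j)
  have hmapj : (p.map f) ^ j = ⊥ := by
    have h1 : Ideal.map f (sp j) = Ideal.map f (p ^ j) := Ideal.map_comap_map ..
    have h2 : Ideal.map f (sp (j + 1)) = Ideal.map f (p ^ (j + 1)) := Ideal.map_comap_map ..
    have h3 : (p.map f) ^ j = (p.map f) ^ (j + 1) := by
      rw [← Ideal.map_pow, ← Ideal.map_pow, ← h1, ← h2, hsub]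
    have h4 : (p.map f) ^ j ≤ ⊥ ⊔ maximalIdeal Rp • (p.map f) ^ j := by
      rw [bot_sup_eq, smul_eq_mul, ← Localization.AtPrime.map_eq_maximalIdeal,
        ← pow_succ']
      exact le_of_eq h3
    exact le_bot_iff.1 (my_nak _ _ h4)
  have hfz : f (z ^ j) = 0 := by
    have h1 : f (z ^ j) ∈ (p.map f) ^ j := by
      rw [← Ideal.map_pow]
      exact Ideal.mem_map_of_mem f (Ideal.pow_mem_pow hzp j)
    rw [hmapj] at h1
    simpa using h1
  have hinj : Function.Injective f :=
    IsLocalization.injective Rp p.primeCompl_le_nonZeroDivisors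
  have hzj : z ^ j = 0 := hinj (by rw [hfz, map_zero])
  exact pow_ne_zero j hz0 hzj

/-- The ideal generated by monomials `x^(q.1) * y^(q.2)` for `q` in a list. -/
def monIdeal (x y : R) (L : List (ℕ × ℕ)) : Ideal R :=
  Ideal.span ((fun q : ℕ × ℕ => x ^ q.1 * y ^ q.2) '' {q | q ∈ L})

/-- Shift of the exponent list: divide generators with positive `x`-exponent by `x`. -/
def expShift (L : List (ℕ × ℕ)) : List (ℕ × ℕ) :=
  L.filterMap (fun q => if q.1 = 0 then none else some (q.1 - 1, q.2))

lemma monIdeal_le_split (x y : R) (L : List (ℕ × ℕ)) (c : ℕ)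
    (hc : ∀ q ∈ L, q.1 = 0 → c ≤ q.2) :
    monIdeal x y L ≤ Ideal.span {y ^ c} ⊔ Ideal.span {x} * monIdeal x y (expShift L) := by
  rw [monIdeal, Ideal.span_le]
  rintro v ⟨q, hq, rfl⟩
  by_cases h0 : q.1 = 0
  · refine Submodule.mem_sup_left (Ideal.mem_span_singleton.2 ?_)
    show y ^ c ∣ x ^ q.1 * y ^ q.2
    rw [h0, pow_zero, one_mul]
    exact pow_dvd_pow y (hc q hq h0)
  · refine Submodule.mem_sup_right (Ideal.mem_span_singleton_mul.2 ?_)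
    refine ⟨x ^ (q.1 - 1) * y ^ q.2, ?_, ?_⟩
    · refine Ideal.subset_span ⟨(q.1 - 1, q.2), ?_, rfl⟩
      simp only [expShift, Set.mem_setOf_eq, List.mem_filterMap]
      exact ⟨q, hq, by simp [h0]⟩
    · rw [← mul_assoc, ← pow_succ']
      congr 2
      omega

lemma not_mem_monIdeal [IsDomain R] [IsLocalRing R] {x y : R} (hx0 : x ≠ 0)
    (hxpr : (Ideal.span {x}).IsPrime) (hy : y ∉ Ideal.span {x})
    (hym : y ∈ maximalIdeal R) (b : ℕ) :
    ∀ (a : ℕ) (L : List (ℕ × ℕ)), (∀ q ∈ L, ¬(q.1 ≤ a ∧ q.2 ≤ b)) →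
      x ^ a * y ^ b ∉ monIdeal x y L := by
  intro a
  induction a with
  | zero =>
    intro L hL hmem
    have hsplit := monIdeal_le_split x y L (b + 1)
      (fun q hq h0 => by have := hL q hq; omega)
    obtain ⟨v₀, hv₀, v₁, hv₁, hsum⟩ := Submodule.mem_sup.1 (hsplit hmem)
    obtain ⟨d, rfl⟩ := Ideal.mem_span_singleton'.1 hv₀
    obtain ⟨w, hw, rfl⟩ := Ideal.mem_span_singleton_mul.1 hv₁
    have hu : IsUnit (1 - d * y) := by
      refine IsLocalRing.isUnit_one_sub_self_of_mem_nonunits _ ?_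
      exact (maximalIdeal R).mul_mem_left d hym
    have h7 : y ^ b * (hu.unit : R) = x * w := by
      rw [IsUnit.unit_spec]
      linear_combination -hsum
    have hyb : y ^ b ∈ Ideal.span {x} := by
      refine Ideal.mem_span_singleton'.2 ⟨w * ↑hu.unit⁻¹, ?_⟩
      have h8 := congrArg (fun t => t * ((hu.unit⁻¹ : Rˣ) : R)) h7
      simp only [mul_assoc] at h8
      rw [Units.mul_inv, mul_one] at h8
      linear_combination -h8
    exact hy (hxpr.mem_of_pow_mem b hyb)
  | succ a IH =>
    intro L hL hmem
    have hsplit := monIdeal_le_split x y L (b + 1)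
      (fun q hq h0 => by have := hL q hq; omega)
    obtain ⟨v₀, hv₀, v₁, hv₁, hsum⟩ := Submodule.mem_sup.1 (hsplit hmem)
    obtain ⟨d, rfl⟩ := Ideal.mem_span_singleton'.1 hv₀
    obtain ⟨w, hw, rfl⟩ := Ideal.mem_span_singleton_mul.1 hv₁
    have hd : d * y ^ (b + 1) ∈ Ideal.span {x} :=
      Ideal.mem_span_singleton'.2 ⟨x ^ a * y ^ b - w, by linear_combination -hsum⟩
    have hyb1 : y ^ (b + 1) ∉ Ideal.span {x} := fun h => hy (hxpr.mem_of_pow_mem _ h)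
    have hd' : d ∈ Ideal.span {x} := (hxpr.mem_or_mem hd).resolve_right hyb1
    obtain ⟨d', rfl⟩ := Ideal.mem_span_singleton'.1 hd'
    have hcancel : x ^ a * y ^ b = d' * y ^ (b + 1) + w := by
      refine mul_left_cancel₀ hx0 ?_
      linear_combination -hsum
    refine IH ((0, b + 1) :: expShift L) ?_ ?_
    · rintro q hq
      rcases List.mem_cons.1 hq with rfl | hq'
      · dsimp only
        omega
      · simp only [expShift, List.mem_filterMap] at hq'
        obtain ⟨q', hq'', heq⟩ := hq'
        by_cases h0 : q'.1 = 0
        · simp [h0] at heq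
        · simp only [h0, if_false] at heq
          have := hL q' hq''
          rw [Option.some_inj] at heq
          subst heq
          dsimp only
          omega
    · rw [hcancel]
      refine Submodule.add_mem _ ?_ ?_
      · have hgen : x ^ 0 * y ^ (b + 1) ∈ monIdeal x y ((0, b + 1) :: expShift L) :=
          Ideal.subset_span ⟨(0, b + 1), by simp, rfl⟩
        rw [pow_zero, one_mul] at hgen
        exact Ideal.mul_mem_left _ d' hgen
      · refine Ideal.span_mono ?_ hw
        exact Set.image_mono (fun q hq => List.mem_cons_of_mem _ hq)

lemma mem_monIdeal_of_pair (x y : R) {L : List (ℕ × ℕ)} {q : ℕ × ℕ} (hq : q ∈ L) (v : R)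
    (hv : v = x ^ q.1 * y ^ q.2) : v ∈ monIdeal x y L :=
  hv ▸ Ideal.subset_span ⟨q, hq, rfl⟩

end Aux

/-- For `0 < α < β < n`, `I = (x³, x²yᵅ, xyᵝ, yⁿ)` and `Q = (x³, yⁿ)`:
`I² = QI` iff `β ≤ 2α`, `n ≤ α + β`, and `n + α ≤ 2β`. -/
theorem stable_iff_inequalities {R : Type*} [CommRing R] [IsDomain R] [IsNoetherianRing R]
    [IsLocalRing R] (x y : R) (hm : maximalIdeal R = Ideal.span {x, y})
    (hdim : ringKrullDim R = 2)
    (α β n : ℕ) (hα : 0 < α) (hαβ : α < β) (hβn : β < n)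
    (I Q : Ideal R)
    (hI : I = Ideal.span {x ^ 3, x ^ 2 * y ^ α, x * y ^ β, y ^ n})
    (hQ : Q = Ideal.span {x ^ 3, y ^ n}) :
    I ^ 2 = Q * I ↔ (β ≤ 2 * α ∧ n ≤ α + β ∧ n + α ≤ 2 * β) := by
  have hxm : x ∈ maximalIdeal R := hm ▸ Ideal.subset_span (by simp)
  have hym : y ∈ maximalIdeal R := hm ▸ Ideal.subset_span (by simp)
  have hxpr : (Ideal.span {x}).IsPrime := span_x_isPrime hm hdim
  obtain ⟨p, hp, hpbot, hplt⟩ := exists_mid_prime hdim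
  have hx0 : x ≠ 0 := by
    rintro rfl
    have := prime_eq_span_singleton hm hp p.zero_mem hplt
    rw [Ideal.span_singleton_eq_bot.2 rfl] at this
    exact hpbot.ne' this
  have hy : y ∉ Ideal.span {x} := by
    intro hyx
    have hmx : maximalIdeal R = Ideal.span {x} := by
      refine le_antisymm ?_ ((Ideal.span_singleton_le_iff_mem _).2 hxm)
      rw [hm, Ideal.span_le]
      intro t ht
      simp only [Set.mem_insert_iff, Set.mem_singleton_iff] at ht
      rcases ht with h | h <;> rw [h]
      · exact Ideal.mem_span_singleton_self x
      · exact hyx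
    have hxp : x ∉ p := by
      intro hxp
      exact hplt.ne (le_antisymm hplt.le (hmx ▸ (Ideal.span_singleton_le_iff_mem _).2 hxp))
    have : p ≤ ⊥ := by
      refine my_nak p ⊥ ?_
      intro v hv
      obtain ⟨c, rfl⟩ := Ideal.mem_span_singleton'.1 (hmx ▸ hplt.le hv)
      have hc : c ∈ p := (hp.mem_or_mem hv).resolve_right hxp
      refine Submodule.mem_sup_right ?_
      rw [smul_eq_mul, mul_comm c x]
      exact Ideal.mul_mem_mul hxm hc
    exact hpbot.not_ge this
  -- generator memberships
  have hQ3 : x ^ 3 ∈ Ideal.span ({x ^ 3, y ^ n} : Set R) := Ideal.subset_span (by simp)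
  have hQn : y ^ n ∈ Ideal.span ({x ^ 3, y ^ n} : Set R) := Ideal.subset_span (by simp)
  have hI3 : x ^ 3 ∈ Ideal.span ({x ^ 3, x ^ 2 * y ^ α, x * y ^ β, y ^ n} : Set R) :=
    Ideal.subset_span (by simp)
  have hI2a : x ^ 2 * y ^ α ∈ Ideal.span ({x ^ 3, x ^ 2 * y ^ α, x * y ^ β, y ^ n} : Set R) :=
    Ideal.subset_span (by simp)
  have hI1b : x * y ^ β ∈ Ideal.span ({x ^ 3, x ^ 2 * y ^ α, x * y ^ β, y ^ n} : Set R) :=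
    Ideal.subset_span (by simp)
  have hIn : y ^ n ∈ Ideal.span ({x ^ 3, x ^ 2 * y ^ α, x * y ^ β, y ^ n} : Set R) :=
    Ideal.subset_span (by simp)
  constructor
  · intro heq
    set L : List (ℕ × ℕ) := [(6,0),(5,α),(4,β),(3,n),(2,α+n),(1,β+n),(0,2*n)] with hLdef
    have hQI : Q * I ≤ monIdeal x y L := by
      rw [hQ, hI, Ideal.span_mul_span, Ideal.span_le]
      rintro v hv
      simp only [Set.mem_mul] at hv
      obtain ⟨s, hs, t, ht, rfl⟩ := hv
      simp only [Set.mem_insert_iff, Set.mem_singleton_iff] at hs ht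
      rcases hs with rfl | rfl <;> rcases ht with rfl | rfl | rfl | rfl
      · exact mem_monIdeal_of_pair x y (q := (6,0)) (by simp [hLdef]) _ (by ring)
      · exact mem_monIdeal_of_pair x y (q := (5,α)) (by simp [hLdef]) _ (by ring)
      · exact mem_monIdeal_of_pair x y (q := (4,β)) (by simp [hLdef]) _ (by ring)
      · exact mem_monIdeal_of_pair x y (q := (3,n)) (by simp [hLdef]) _ (by ring)
      · exact mem_monIdeal_of_pair x y (q := (3,n)) (by simp [hLdef]) _ (by ring)
      · exact mem_monIdeal_of_pair x y (q := (2,α+n)) (by simp [hLdef]) _ (by ring)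
      · exact mem_monIdeal_of_pair x y (q := (1,β+n)) (by simp [hLdef]) _ (by ring)
      · exact mem_monIdeal_of_pair x y (q := (0,2*n)) (by simp [hLdef]) _ (by ring)
    refine ⟨?_, ?_, ?_⟩
    · by_contra hcon
      push_neg at hcon
      have h1 : x ^ 2 * y ^ α ∈ I := hI ▸ hI2a
      have h2 : x ^ 4 * y ^ (2*α) ∈ I ^ 2 := by
        rw [pow_two]
        have h3 := Ideal.mul_mem_mul h1 h1
        rwa [show (x^2*y^α) * (x^2*y^α) = x^4*y^(2*α) from by ring] at h3
      rw [heq] at h2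
      refine not_mem_monIdeal hx0 hxpr hy hym (2*α) 4 L ?_ (hQI h2)
      intro q hq
      simp only [hLdef, List.mem_cons, List.not_mem_nil, or_false] at hq
      rcases hq with rfl | rfl | rfl | rfl | rfl | rfl | rfl <;> dsimp only <;> omega
    · by_contra hcon
      push_neg at hcon
      have h1 : x ^ 2 * y ^ α ∈ I := hI ▸ hI2a
      have h1' : x * y ^ β ∈ I := hI ▸ hI1b
      have h2 : x ^ 3 * y ^ (α + β) ∈ I ^ 2 := by
        rw [pow_two]
        have h3 := Ideal.mul_mem_mul h1 h1'
        rwa [show (x^2*y^α) * (x*y^β) = x^3*y^(α+β) from by ring] at h3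
      rw [heq] at h2
      refine not_mem_monIdeal hx0 hxpr hy hym (α+β) 3 L ?_ (hQI h2)
      intro q hq
      simp only [hLdef, List.mem_cons, List.not_mem_nil, or_false] at hq
      rcases hq with rfl | rfl | rfl | rfl | rfl | rfl | rfl <;> dsimp only <;> omega
    · by_contra hcon
      push_neg at hcon
      have h1' : x * y ^ β ∈ I := hI ▸ hI1b
      have h2 : x ^ 2 * y ^ (2*β) ∈ I ^ 2 := by
        rw [pow_two]
        have h3 := Ideal.mul_mem_mul h1' h1'
        rwa [show (x*y^β) * (x*y^β) = x^2*y^(2*β) from by ring] at h3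
      rw [heq] at h2
      refine not_mem_monIdeal hx0 hxpr hy hym (2*β) 2 L ?_ (hQI h2)
      intro q hq
      simp only [hLdef, List.mem_cons, List.not_mem_nil, or_false] at hq
      rcases hq with rfl | rfl | rfl | rfl | rfl | rfl | rfl <;> dsimp only <;> omega
  · rintro ⟨h1, h2, h3⟩
    refine le_antisymm ?_ ?_
    · rw [pow_two, hI, hQ, Ideal.span_mul_span, Ideal.span_le]
      rintro v hv
      simp only [Set.mem_mul] at hv
      obtain ⟨s, hs, t, ht, rfl⟩ := hv
      simp only [Set.mem_insert_iff, Set.mem_singleton_iff] at hs ht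
      have key : ∀ u v w : R, u ∈ Ideal.span ({x ^ 3, y ^ n} : Set R) →
          v ∈ Ideal.span ({x ^ 3, x ^ 2 * y ^ α, x * y ^ β, y ^ n} : Set R) →
          s * t = w * (u * v) →
          s * t ∈ Ideal.span ({x ^ 3, y ^ n} : Set R) *
            Ideal.span ({x ^ 3, x ^ 2 * y ^ α, x * y ^ β, y ^ n} : Set R) := by
        intro u v w hu hv hw
        rw [hw]
        exact Ideal.mul_mem_left _ w (Ideal.mul_mem_mul hu hv)
      have e1 : 2*α - β + β = 2*α := by omega
      have e2 : α + β - n + n = α + β := by omega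
      have e3 : 2*β - (α + n) + (α + n) = 2*β := by omega
      rcases hs with rfl | rfl | rfl | rfl <;> rcases ht with rfl | rfl | rfl | rfl
      · exact key _ _ 1 hQ3 hI3 (by ring)
      · exact key _ _ 1 hQ3 hI2a (by ring)
      · exact key _ _ 1 hQ3 hI1b (by ring)
      · exact key _ _ 1 hQ3 hIn (by ring)
      · exact key _ _ 1 hQ3 hI2a (by ring)
      · -- (x²yᵅ)(x²yᵅ) = y^(2α-β) * (x³ * (x yᵝ))
        refine key (x ^ 3) (x * y ^ β) (y ^ (2*α - β)) hQ3 hI1b ?_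
        calc (x^2*y^α) * (x^2*y^α) = x^4 * y^(2*α) := by ring
        _ = x^4 * y^(2*α - β + β) := by rw [e1]
        _ = x^4 * (y^(2*α-β) * y^β) := by rw [pow_add]
        _ = y^(2*α-β) * (x^3 * (x*y^β)) := by ring
      · -- (x²yᵅ)(xyᵝ) = y^(α+β-n) * (x³ * yⁿ)
        refine key (x ^ 3) (y ^ n) (y ^ (α + β - n)) hQ3 hIn ?_
        calc (x^2*y^α) * (x*y^β) = x^3 * y^(α+β) := by ring
        _ = x^3 * y^(α+β-n+n) := by rw [e2]
        _ = x^3 * (y^(α+β-n) * y^n) := by rw [pow_add]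
        _ = y^(α+β-n) * (x^3 * y^n) := by ring
      · exact key (y ^ n) (x ^ 2 * y ^ α) 1 hQn hI2a (by ring)
      · exact key _ _ 1 hQ3 hI1b (by ring)
      · refine key (x ^ 3) (y ^ n) (y ^ (α + β - n)) hQ3 hIn ?_
        calc (x*y^β) * (x^2*y^α) = x^3 * y^(α+β) := by ring
        _ = x^3 * y^(α+β-n+n) := by rw [e2]
        _ = x^3 * (y^(α+β-n) * y^n) := by rw [pow_add]
        _ = y^(α+β-n) * (x^3 * y^n) := by ring
      · -- (xyᵝ)(xyᵝ) = y^(2β-α-n) * (yⁿ * (x²yᵅ))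
        refine key (y ^ n) (x ^ 2 * y ^ α) (y ^ (2*β - (α + n))) hQn hI2a ?_
        calc (x*y^β) * (x*y^β) = x^2 * y^(2*β) := by ring
        _ = x^2 * y^(2*β - (α+n) + (α+n)) := by rw [e3]
        _ = x^2 * (y^(2*β-(α+n)) * y^(α+n)) := by rw [pow_add]
        _ = x^2 * (y^(2*β-(α+n)) * (y^α * y^n)) := by rw [pow_add]
        _ = y^(2*β-(α+n)) * (y^n * (x^2*y^α)) := by ring
      · exact key (y ^ n) (x * y ^ β) 1 hQn hI1b (by ring)
      · exact key _ _ 1 hQn hI3 (by ring)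
      · exact key (y ^ n) (x ^ 2 * y ^ α) 1 hQn hI2a (by ring)
      · exact key (y ^ n) (x * y ^ β) 1 hQn hI1b (by ring)
      · exact key _ _ 1 hQn hIn (by ring)
    · rw [pow_two]
      refine Ideal.mul_mono ?_ le_rfl
      rw [hQ, hI]
      refine Ideal.span_mono ?_
      intro t ht
      simp only [Set.mem_insert_iff, Set.mem_singleton_iff] at ht ⊢
      tauto
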